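/- ∑_k ψ_{jk}·conj(ξ_k) = v_j for every j (ψ applied to conj(ξ) gives v). Consequently, if J ≠ 0 then ψ is invertible and conj(ξ_k) = ∑_j (ψ^{-1})_{kj}·v_j for every k (in the paper's notation, ξ^{k̄} = ρ_j ψ^{k̄ j}). -/
import Mathlib


open ComplexConjugate Matrix

/-- Matrix determinant lemma (rank-one update), no invertibility needed. -/
lemma det_add_outer {m : Type*} [Fintype m] [DecidableEq m] [Nonempty m]
    (A : Matrix m m ℂ) (u w : m → ℂ) :
    Matrix.det (A + Matrix.of (fun i j => u i * w j)) =
      A.det + ∑ i, u i * Matrix.cramer Aᵀ w i := by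
  classical
  set F : Finset m → ℂ :=
    fun s => Matrix.det (Matrix.of (s.piecewise (fun i => u i • w) (fun i => A i))) with hF
  have hdet : Matrix.det (A + Matrix.of (fun i j => u i * w j)) = ∑ s : Finset m, F s := by
    have h0 : (A + Matrix.of (fun i j => u i * w j)) =
        Matrix.of (((fun i => u i • w) + fun i => A i : m → m → ℂ)) := by
      ext i j
      simp [Matrix.add_apply, mul_comm, add_comm]
    rw [h0]
    exact Matrix.detRowAlternating.toMultilinearMap.map_add_univ
      (fun i => u i • w) (fun i => A i)
  have hzero : ∀ s : Finset m, 1 < s.card → F s = 0 := by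
    intro s hs
    obtain ⟨i, hi, j, hj, hij⟩ := Finset.one_lt_card.mp hs
    set M : Matrix m m ℂ :=
      Matrix.of (s.piecewise (fun i => u i • w) (fun i => A i)) with hM
    have hMi : M i = u i • w :=
      Finset.piecewise_eq_of_mem s (fun i => u i • w) (fun i => A i) hi
    have hMj : M j = u j • w :=
      Finset.piecewise_eq_of_mem s (fun i => u i • w) (fun i => A i) hj
    have h1 : M.det = u i * (M.updateRow i w).det := by
      conv_lhs => rw [← Matrix.updateRow_eq_self M i, hMi, Matrix.det_updateRow_smul]
    have hrowj : (M.updateRow i w) j = u j • w := by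
      rw [Matrix.updateRow_ne hij.symm, hMj]
    have h2 : (M.updateRow i w).det = u j * ((M.updateRow i w).updateRow j w).det := by
      conv_lhs => rw [← Matrix.updateRow_eq_self (M.updateRow i w) j, hrowj,
        Matrix.det_updateRow_smul]
    have h3 : ((M.updateRow i w).updateRow j w).det = 0 := by
      apply Matrix.det_zero_of_row_eq hij
      rw [Matrix.updateRow_ne hij, Matrix.updateRow_self, Matrix.updateRow_self]
    show M.det = 0
    rw [h1, h2, h3, mul_zero, mul_zero]
  have hempty : F ∅ = A.det := by
    have h0 : Matrix.of ((∅ : Finset m).piecewise (fun i => u i • w) (fun i => A i)) = A := by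
      ext i j
      simp
    show Matrix.det _ = A.det
    rw [h0]
  have hsingle : ∀ i, F {i} = u i * Matrix.cramer Aᵀ w i := by
    intro i
    have hp : ({i} : Finset m).piecewise (fun i => u i • w) (fun i => A i) =
        Function.update (fun i => A i) i (u i • w) := Finset.piecewise_singleton _ _ _
    have h0 : Matrix.of (({i} : Finset m).piecewise (fun i => u i • w) (fun i => A i)) =
        A.updateRow i (u i • w) := by
      ext a b
      rw [hp]
      by_cases h : a = i
      · subst h; simp
      · simp [Function.update_of_ne h, Matrix.updateRow_apply, if_neg h]
    show Matrix.det _ = _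
    rw [h0, Matrix.det_updateRow_smul, Matrix.cramer_transpose_apply]
  have hset : (Finset.univ : Finset (Finset m)) =
      insert ∅ ((Finset.univ : Finset m).image (fun i => ({i} : Finset m))) ∪
        (Finset.univ.filter (fun s : Finset m => 1 < s.card)) := by
    ext s
    simp only [Finset.mem_univ, true_iff, Finset.mem_union, Finset.mem_insert,
      Finset.mem_image, Finset.mem_filter]
    rcases Nat.lt_or_ge 1 s.card with h | h
    · right; exact ⟨trivial, h⟩
    · left
      obtain ⟨a, ha⟩ := Finset.card_le_one_iff_subset_singleton.mp h
      rcases Finset.subset_singleton_iff.mp ha with h' | h'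
      · exact Or.inl h'
      · exact Or.inr ⟨a, trivial, h'.symm⟩
  have hdisj : Disjoint
      (insert ∅ ((Finset.univ : Finset m).image (fun i => ({i} : Finset m))))
      (Finset.univ.filter (fun s : Finset m => 1 < s.card)) := by
    rw [Finset.disjoint_right]
    intro s hs hs'
    have h1 := (Finset.mem_filter.mp hs).2
    rcases Finset.mem_insert.mp hs' with h | h
    · simp [h] at h1
    · obtain ⟨i, _, rfl⟩ := Finset.mem_image.mp h
      simp at h1
  rw [hdet, hset, Finset.sum_union hdisj, Finset.sum_insert (by simp), Finset.sum_image
    (fun a _ b _ h => Finset.singleton_injective h)]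
  rw [hempty]
  have hrest : ∑ s ∈ Finset.univ.filter (fun s : Finset m => 1 < s.card), F s = 0 :=
    Finset.sum_eq_zero (fun s hs => hzero s (Finset.mem_filter.mp hs).2)
  rw [hrest, add_zero]
  congr 1
  exact Finset.sum_congr rfl (fun i _ => hsingle i)

/-- `ψ` applied to `conj ξ` gives `v`: `∑_k ψ_{jk}·conj(ξ_k) = v_j` for all `j`.
Consequently, if `J ≠ 0` then `ψ` is invertible and `conj(ξ_k) = ∑_j (ψ⁻¹)_{kj}·v_j`,
i.e. `ξ^{k̄} = ρ_j ψ^{k̄ j}`. -/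
theorem stmt_5 (n : ℕ) (hn : 1 ≤ n)
    (H : Matrix (Fin (n + 1)) (Fin (n + 1)) ℂ) (v ξ : Fin (n + 1) → ℂ) (r : ℝ)
    (hξH : ∀ k, ∑ j, ξ j * H j k = (r : ℂ) * conj (v k))
    (hvξ : ∑ j, v j * ξ j = 1)
    (hHerm : ∀ j k, conj (H j k) = H k j)
    (J : ℂ) (hJ : J = ∑ j, ∑ k, conj (v j) * H.adjugate j k * v k)
    (ψ : Matrix (Fin (n + 1)) (Fin (n + 1)) ℂ)
    (hψ : ∀ j k, ψ j k = H j k + ((1 : ℂ) - (r : ℂ)) * v j * conj (v k)) :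
    (∀ j, ∑ k, ψ j k * conj (ξ k) = v j) ∧
      (J ≠ 0 → IsUnit ψ ∧ ∀ k, conj (ξ k) = ∑ j, ψ⁻¹ k j * v j) := by
  -- conjugate of the normalization
  have hc1 : ∑ k, conj (v k) * conj (ξ k) = 1 := by
    have h := congrArg conj hvξ
    rw [map_sum] at h
    simpa [_root_.map_mul] using h
  -- H applied to conj ξ gives r • v
  have hHξ : ∀ j, ∑ k, H j k * conj (ξ k) = (r : ℂ) * v j := by
    intro j
    calc ∑ k, H j k * conj (ξ k) = ∑ k, conj (ξ k * H k j) := by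
          apply Finset.sum_congr rfl
          intro k _
          rw [_root_.map_mul, hHerm k j, mul_comm]
      _ = conj ((r : ℂ)) * conj (conj (v j)) := by
            rw [← map_sum, hξH j, _root_.map_mul]
      _ = (r : ℂ) * v j := by simp [Complex.conj_ofReal]
  -- Part 1
  have main1 : ∀ j, ∑ k, ψ j k * conj (ξ k) = v j := by
    intro j
    calc ∑ k, ψ j k * conj (ξ k)
        = ∑ k, (H j k * conj (ξ k) +
            ((1 : ℂ) - (r : ℂ)) * v j * (conj (v k) * conj (ξ k))) := by
          apply Finset.sum_congr rfl
          intro k _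
          rw [hψ j k]; ring
      _ = (∑ k, H j k * conj (ξ k)) +
            ((1 : ℂ) - (r : ℂ)) * v j * ∑ k, conj (v k) * conj (ξ k) := by
          rw [Finset.sum_add_distrib, Finset.mul_sum]
      _ = (r : ℂ) * v j + ((1 : ℂ) - (r : ℂ)) * v j * 1 := by rw [hHξ j, hc1]
      _ = v j := by ring
  refine ⟨main1, fun hJ0 => ?_⟩
  -- det H * ξ k = r * ∑ m, conj (v m) * adj H m k
  have hadj : ∀ k, H.det * ξ k = (r : ℂ) * ∑ m, conj (v m) * H.adjugate m k := by
    intro k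
    have hHA : ∀ j, ∑ m, H j m * H.adjugate m k = H.det * (if j = k then 1 else 0) := by
      intro j
      have h := congrFun (congrFun (Matrix.mul_adjugate H) j) k
      simpa [Matrix.mul_apply, Matrix.one_apply] using h
    have h1 : ∑ j, ξ j * (∑ m, H j m * H.adjugate m k) = H.det * ξ k := by
      simp only [hHA]
      simp [mul_ite, mul_comm, mul_left_comm]
    have h2 : ∑ j, ξ j * (∑ m, H j m * H.adjugate m k) =
        ∑ m, ((r : ℂ) * conj (v m)) * H.adjugate m k := by
      calc ∑ j, ξ j * (∑ m, H j m * H.adjugate m k)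
          = ∑ j, ∑ m, (ξ j * H j m) * H.adjugate m k := by
            simp [Finset.mul_sum, mul_assoc]
        _ = ∑ m, ∑ j, (ξ j * H j m) * H.adjugate m k := Finset.sum_comm
        _ = ∑ m, ((r : ℂ) * conj (v m)) * H.adjugate m k := by
            apply Finset.sum_congr rfl
            intro m _
            rw [← Finset.sum_mul, hξH m]
    rw [← h1, h2, Finset.mul_sum]
    apply Finset.sum_congr rfl
    intro m _
    ring
  -- det H = r * J
  have hdetH : H.det = (r : ℂ) * J := by
    calc H.det = H.det * ∑ k, v k * ξ k := by rw [hvξ, mul_one]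
      _ = ∑ k, v k * (H.det * ξ k) := by
          rw [Finset.mul_sum]
          apply Finset.sum_congr rfl
          intro k _
          ring
      _ = ∑ k, v k * ((r : ℂ) * ∑ m, conj (v m) * H.adjugate m k) := by
          apply Finset.sum_congr rfl
          intro k _
          rw [hadj k]
      _ = (r : ℂ) * ∑ k, ∑ m, conj (v m) * H.adjugate m k * v k := by
          rw [Finset.mul_sum]
          apply Finset.sum_congr rfl
          intro k _
          rw [← Finset.sum_mul]
          ring
      _ = (r : ℂ) * J := by rw [hJ, Finset.sum_comm]
  -- det ψ = J
  have hcr : ∀ i, Matrix.cramer Hᵀ (fun k => conj (v k)) i =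
      ∑ k, conj (v k) * H.adjugate k i := by
    intro i
    rw [Matrix.cramer_eq_adjugate_mulVec, ← Matrix.adjugate_transpose]
    simp [Matrix.mulVec, dotProduct, Matrix.transpose_apply, mul_comm]
  have hψeq : ψ = H + Matrix.of (fun j k =>
      (((1 : ℂ) - (r : ℂ)) * v j) * conj (v k)) := by
    ext j k
    rw [Matrix.add_apply, Matrix.of_apply, hψ j k, mul_assoc]
  have hdetψ : ψ.det = J := by
    rw [hψeq, det_add_outer H (fun j => ((1 : ℂ) - (r : ℂ)) * v j) (fun k => conj (v k))]
    have h1 : ∑ i, (((1 : ℂ) - (r : ℂ)) * v i) *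
        Matrix.cramer Hᵀ (fun k => conj (v k)) i = ((1 : ℂ) - (r : ℂ)) * J := by
      calc ∑ i, (((1 : ℂ) - (r : ℂ)) * v i) * Matrix.cramer Hᵀ (fun k => conj (v k)) i
          = ((1 : ℂ) - (r : ℂ)) * ∑ i, ∑ k, conj (v k) * H.adjugate k i * v i := by
            rw [Finset.mul_sum]
            apply Finset.sum_congr rfl
            intro i _
            rw [hcr i, ← Finset.sum_mul]
            ring
        _ = ((1 : ℂ) - (r : ℂ)) * J := by rw [hJ, Finset.sum_comm]
    rw [h1, hdetH]
    ring
  have hdet0 : IsUnit ψ.det := isUnit_iff_ne_zero.mpr (by rw [hdetψ]; exact hJ0)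
  refine ⟨(Matrix.isUnit_iff_isUnit_det ψ).mpr hdet0, ?_⟩
  have hmv : ψ *ᵥ (fun k => conj (ξ k)) = v := by
    funext j
    simpa [Matrix.mulVec, dotProduct] using main1 j
  have hsol : (fun k => conj (ξ k)) = ψ⁻¹ *ᵥ v := by
    rw [← hmv, Matrix.mulVec_mulVec, Matrix.nonsing_inv_mul ψ hdet0, Matrix.one_mulVec]
  intro k
  have h := congrFun hsol k
  simpa [Matrix.mulVec, dotProduct] using h
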